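/- Let F(u) = ∫₀^{u} exp(t²) dt, f(u) = 1 − 2·u·exp(−u²)·F(u), let u₀ be the unique zero of f in (0, ∞), fix q > 0, and define h(y) = ∫₀^{y} f(q·η) dη. Suppose 0 < ĉ₁ⁱ < ĉ₁ʲ, let c ∈ (0, 1], and suppose ỹⁱ, ỹʲ ∈ [0, u₀/q] satisfy h(ỹⁱ) = c·ĉ₁ⁱ and h(ỹʲ) = c·ĉ₁ʲ. Then ỹⁱ < ỹʲ, and moreover f(q·ỹⁱ) > f(q·ỹʲ); equivalently, writing κⁱ(y) = (1/ĉ₁ⁱ)·f(q·y) and κʲ(y) = (1/ĉ₁ʲ)·f(q·y), the curvatures at the points with common tangent inclination γ₀ = arccos(c) satisfy κⁱ(ỹⁱ) > (ĉ₁ʲ/ĉ₁ⁱ)·κʲ(ỹʲ). -/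

import Mathlib

open Real MeasureTheory intervalIntegral Set

/-- `F(u) = ∫₀^u exp(t²) dt`. -/
noncomputable def Ferf (u : ℝ) : ℝ := ∫ t in (0:ℝ)..u, Real.exp (t ^ 2)

/-- `f(u) = 1 - 2 u exp(-u²) F(u)`, the rescaled curvature function. -/
noncomputable def fker (u : ℝ) : ℝ := 1 - 2 * u * Real.exp (-(u ^ 2)) * Ferf u

lemma cont_exp_sq : Continuous (fun t : ℝ => Real.exp (t ^ 2)) :=
  Real.continuous_exp.comp (continuous_pow 2)

lemma hasDerivAt_Ferf (u : ℝ) : HasDerivAt Ferf (Real.exp (u ^ 2)) u :=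
  (cont_exp_sq.integral_hasStrictDerivAt 0 u).hasDerivAt

lemma continuous_Ferf : Continuous Ferf := by
  have : Differentiable ℝ Ferf := fun u => (hasDerivAt_Ferf u).differentiableAt
  exact this.continuous

lemma Ferf_nonneg {u : ℝ} (hu : 0 ≤ u) : 0 ≤ Ferf u := by
  apply intervalIntegral.integral_nonneg hu
  intro x _
  positivity

lemma Ferf_pos {u : ℝ} (hu : 0 < u) : 0 < Ferf u := by
  apply intervalIntegral.intervalIntegral_pos_of_pos (f := fun t => Real.exp (t ^ 2))
  · exact cont_exp_sq.intervalIntegrable _ _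
  · intro x; positivity
  · exact hu

lemma continuous_fker : Continuous fker := by
  unfold fker
  exact continuous_const.sub (((continuous_const.mul continuous_id).mul
    (Real.continuous_exp.comp (continuous_pow 2).neg)).mul continuous_Ferf)

lemma hasDerivAt_fker (u : ℝ) :
    HasDerivAt fker (-(2 * Real.exp (-(u ^ 2)) * Ferf u * (1 - 2 * u ^ 2) + 2 * u)) u := by
  have h1 : HasDerivAt (fun u : ℝ => Real.exp (-(u ^ 2))) (Real.exp (-(u ^ 2)) * (-(2 * u))) u := by
    have : HasDerivAt (fun u : ℝ => -(u ^ 2)) (-(2 * u)) u := by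
      simpa using (show HasDerivAt (fun u : ℝ => -(u ^ 2)) _ u from (hasDerivAt_pow 2 u).neg)
    exact (Real.hasDerivAt_exp _).comp u this
  have h2 : HasDerivAt (fun u : ℝ => 2 * u) 2 u := by
    simpa using (hasDerivAt_id u).const_mul 2
  have h3 : HasDerivAt (fun u : ℝ => 2 * u * Real.exp (-(u ^ 2)))
      (2 * Real.exp (-(u ^ 2)) + 2 * u * (Real.exp (-(u ^ 2)) * (-(2 * u)))) u := by
    simpa using (show HasDerivAt (fun u : ℝ => 2 * u * Real.exp (-(u ^ 2))) _ u from h2.mul h1)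
  have h4 := h3.mul (hasDerivAt_Ferf u)
  have h5 : HasDerivAt fker _ u := (hasDerivAt_const u (1:ℝ)).sub h4
  convert h5 using 1
  have : Real.exp (-(u ^ 2)) * Real.exp (u ^ 2) = 1 := by
    rw [← Real.exp_add]; simp
  linear_combination 2 * u * this

lemma deriv_fker_neg {u₀ : ℝ} (huniq : ∀ u : ℝ, 0 < u → fker u = 0 → u = u₀)
    {u : ℝ} (hu : 0 < u) (hfu : 0 < fker u) : deriv fker u < 0 := by
  rw [(hasDerivAt_fker u).deriv]
  have hF : 0 < Ferf u := Ferf_pos hu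
  have hE : 0 < Real.exp (-(u ^ 2)) := Real.exp_pos _
  have hlt : 2 * u * Real.exp (-(u ^ 2)) * Ferf u < 1 := by
    have := hfu; unfold fker at this; linarith
  nlinarith

/-- fker is positive on [0, u₀). -/
lemma fker_pos_of_lt {u₀ : ℝ} (hu₀ : 0 < u₀)
    (huniq : ∀ u : ℝ, 0 < u → fker u = 0 → u = u₀)
    {u : ℝ} (h0 : 0 ≤ u) (hlt : u < u₀) : 0 < fker u := by
  have hf0 : fker 0 = 1 := by
    unfold fker Ferf; simp
  rcases lt_trichotomy (fker u) 0 with hneg | hzero | hpos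
  · exfalso
    have hu : 0 < u := by
      rcases h0.lt_or_eq with h | h
      · exact h
      · exfalso; rw [← h, hf0] at hneg; linarith
    have hIVT : (0:ℝ) ∈ Set.Ioo (fker u) (fker 0) := by
      rw [hf0]; exact ⟨hneg, one_pos⟩
    have := intermediate_value_Ioo' (le_of_lt hu) continuous_fker.continuousOn hIVT
    obtain ⟨z, hz, hfz⟩ := this
    have := huniq z hz.1 hfz
    linarith [hz.2]
  · exfalso
    rcases h0.lt_or_eq with h | h
    · have := huniq u h hzero; linarith
    · rw [← h, hf0] at hzero; linarith
  · exact hpos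

lemma fker_strictAntiOn {u₀ : ℝ} (hu₀ : 0 < u₀)
    (huniq : ∀ u : ℝ, 0 < u → fker u = 0 → u = u₀) :
    StrictAntiOn fker (Set.Icc 0 u₀) := by
  apply strictAntiOn_of_deriv_neg (convex_Icc 0 u₀) continuous_fker.continuousOn
  intro x hx
  rw [interior_Icc] at hx
  exact deriv_fker_neg huniq hx.1 (fker_pos_of_lt hu₀ huniq (le_of_lt hx.1) hx.2)

/-- comparing two steady-state curves with the same `q`: if
`0 < ĉ₁ⁱ < ĉ₁ʲ`, `c ∈ (0,1]`, and `ỹⁱ, ỹʲ ∈ [0, u₀/q]` satisfy `h(ỹⁱ) = c ĉ₁ⁱ` and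
`h(ỹʲ) = c ĉ₁ʲ` (points of common tangent inclination `γ₀ = arccos c`), then
`ỹⁱ < ỹʲ`, `f(q ỹⁱ) > f(q ỹʲ)`, and `κⁱ(ỹⁱ) > (ĉ₁ʲ/ĉ₁ⁱ) κʲ(ỹʲ)`. -/
theorem curvature_comparison_at_common_inclination
    (u₀ q : ℝ) (hu₀ : 0 < u₀) (hfu₀ : fker u₀ = 0)
    (huniq : ∀ u : ℝ, 0 < u → fker u = 0 → u = u₀)
    (hq : 0 < q)
    (h : ℝ → ℝ) (hh : ∀ y : ℝ, h y = ∫ η in (0:ℝ)..y, fker (q * η))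
    (c1i c1j : ℝ) (hi : 0 < c1i) (hij : c1i < c1j)
    (c : ℝ) (hc : c ∈ Set.Ioc (0:ℝ) 1)
    (yi yj : ℝ) (hyi : yi ∈ Set.Icc 0 (u₀ / q)) (hyj : yj ∈ Set.Icc 0 (u₀ / q))
    (hhi : h yi = c * c1i) (hhj : h yj = c * c1j) :
    yi < yj ∧ fker (q * yj) < fker (q * yi) ∧
    (c1j / c1i) * ((1 / c1j) * fker (q * yj)) < (1 / c1i) * fker (q * yi) := by
  have hfun : h = fun y => ∫ η in (0:ℝ)..y, fker (q * η) := funext hh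
  have hcont : Continuous (fun η : ℝ => fker (q * η)) :=
    continuous_fker.comp (continuous_const.mul continuous_id)
  have hmono : StrictMonoOn h (Set.Icc 0 (u₀ / q)) := by
    apply strictMonoOn_of_deriv_pos (convex_Icc _ _)
    · rw [hfun]
      have hd : Differentiable ℝ (fun u : ℝ => ∫ x in (0:ℝ)..u, fker (q * x)) :=
        fun y => (hcont.integral_hasStrictDerivAt 0 y).hasDerivAt.differentiableAt
      exact hd.continuous.continuousOn
    · intro x hx
      rw [interior_Icc] at hx
      rw [hfun, hcont.deriv_integral _ 0 x]
      have h1 : 0 ≤ q * x := le_of_lt (mul_pos hq hx.1)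
      have h2 : q * x < u₀ := by
        calc q * x < q * (u₀ / q) := mul_lt_mul_of_pos_left hx.2 hq
        _ = u₀ := by field_simp
      exact fker_pos_of_lt hu₀ huniq h1 h2
  have hlt : h yi < h yj := by
    rw [hhi, hhj]
    exact mul_lt_mul_of_pos_left hij hc.1
  have hij' : yi < yj := by
    by_contra hcon
    push_neg at hcon
    rcases hcon.lt_or_eq with hlt' | heq
    · exact absurd (hmono hyj hyi hlt') (by linarith)
    · rw [heq] at hlt; exact lt_irrefl _ hlt
  have hqyi : q * yi ∈ Set.Icc 0 u₀ := by
    constructor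
    · exact mul_nonneg (le_of_lt hq) hyi.1
    · calc q * yi ≤ q * (u₀ / q) := mul_le_mul_of_nonneg_left hyi.2 (le_of_lt hq)
      _ = u₀ := by field_simp
  have hqyj : q * yj ∈ Set.Icc 0 u₀ := by
    constructor
    · exact mul_nonneg (le_of_lt hq) hyj.1
    · calc q * yj ≤ q * (u₀ / q) := mul_le_mul_of_nonneg_left hyj.2 (le_of_lt hq)
      _ = u₀ := by field_simp
  have hfanti := fker_strictAntiOn hu₀ huniq
  have hflt : fker (q * yj) < fker (q * yi) :=
    hfanti hqyi hqyj (mul_lt_mul_of_pos_left hij' hq)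
  refine ⟨hij', hflt, ?_⟩
  have hj : 0 < c1j := lt_trans hi hij
  have : (c1j / c1i) * ((1 / c1j) * fker (q * yj)) = (1 / c1i) * fker (q * yj) := by
    field_simp
  rw [this]
  exact mul_lt_mul_of_pos_left hflt (by positivity)
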